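/- Let E ⊆ ℝ with λ(E) = 0, let a < b with E ⊆ (a,b), and let n ≥ 1. Then there exists an open set U with E ⊆ U ⊆ (a,b) such that U is n-small on (a,b). -/

import Mathlib

open Set Filter MeasureTheory Topology
open scoped ENNReal NNReal

/-- `M_f(x,r) = sup { |f(x)-f(y)|/r : |x-y| ≤ r }`, valued in `[0,∞]`. -/
noncomputable def Mf (f : ℝ → ℝ) (x r : ℝ) : ℝ≥0∞ :=
  ⨆ y ∈ {y : ℝ | |x - y| ≤ r}, ENNReal.ofReal (|f x - f y| / r)

/-- The big Lip function: `Lip f(x) = limsup_{r→0⁺} M_f(x,r)`. -/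
noncomputable def bigLip (f : ℝ → ℝ) (x : ℝ) : ℝ≥0∞ :=
  Filter.limsup (fun r => Mf f x r) (𝓝[>] (0 : ℝ))

/-- The little lip function: `lip f(x) = liminf_{r→0⁺} M_f(x,r)`. -/
noncomputable def litLip (f : ℝ → ℝ) (x : ℝ) : ℝ≥0∞ :=
  Filter.liminf (fun r => Mf f x r) (𝓝[>] (0 : ℝ))

/-- A set `E ⊆ ℝ` is trim if `λ(E ∩ (a,b)) < b - a` for every open interval `(a,b)`. -/
def Trim (E : Set ℝ) : Prop :=
  ∀ a b : ℝ, a < b → volume (E ∩ Ioo a b) < ENNReal.ofReal (b - a)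

/-- An open set `U` is `n`-small on `(a,b)`: for every `j ≥ 1`, the parts of `U` in the
`j`-th dyadic blocks at either end of `(a,b)` have measure exactly `(b-a)/2^{2n+j+1}`. -/
def NSmall (U : Set ℝ) (n : ℕ) (a b : ℝ) : Prop :=
  ∀ j : ℕ, 1 ≤ j →
    volume (U ∩ Icc (a + (b - a) / 2 ^ (j + 1)) (a + (b - a) / 2 ^ j)) =
      ENNReal.ofReal ((b - a) / 2 ^ (2 * n + j + 1)) ∧
    volume (U ∩ Icc (b - (b - a) / 2 ^ j) (b - (b - a) / 2 ^ (j + 1))) =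
      ENNReal.ofReal ((b - a) / 2 ^ (2 * n + j + 1))

lemma exists_open_small (S G : Set ℝ) (hS : volume S = 0)
    (hG : IsOpen G) (hSG : S ⊆ G) {ε : ℝ≥0∞} (hε : 0 < ε) :
    ∃ W : Set ℝ, IsOpen W ∧ S ⊆ W ∧ W ⊆ G ∧ volume W < ε := by
  obtain ⟨W, hSW, hWo, hWlt⟩ := S.exists_isOpen_lt_of_lt ε (show volume S < ε by rw [hS]; exact hε)
  exact ⟨W ∩ G, hWo.inter hG, subset_inter hSW hSG, inter_subset_right,
    lt_of_le_of_lt (measure_mono inter_subset_left) hWlt⟩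

lemma exists_pad (S : Set ℝ) (hS : MeasurableSet S) {l c : ℝ} (hc : 0 < c)
    (hlt : volume S < ENNReal.ofReal c) :
    ∃ A : Set ℝ, IsOpen A ∧ A ⊆ Ioo l (l + c) ∧ volume (S ∪ A) = ENNReal.ofReal c := by
  have hfin : volume S ≠ ∞ := (hlt.trans_le le_top).ne
  set f : ℝ → ℝ := fun t => (volume (S ∪ Ioo l (l + t))).toReal with hf
  have hfinU : ∀ t : ℝ, volume (S ∪ Ioo l (l + t)) ≠ ∞ := by
    intro t
    refine (lt_of_le_of_lt (measure_union_le _ _) ?_).ne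
    rw [Real.volume_Ioo]
    exact ENNReal.add_lt_top.mpr ⟨hfin.lt_top, ENNReal.ofReal_lt_top⟩
  have hmono : ∀ s t : ℝ, s ≤ t → f s ≤ f t := by
    intro s t hst
    exact ENNReal.toReal_mono (hfinU t)
      (measure_mono (union_subset_union_right _ (Ioo_subset_Ioo_right (by linarith))))
  have hlip : LipschitzWith 1 f := by
    apply LipschitzWith.of_le_add
    intro s t
    rcases le_total s t with h | h
    · calc f s ≤ f t := hmono s t h
        _ ≤ f t + dist s t := le_add_of_nonneg_right dist_nonneg
    · have hsub : Ioo l (l + s) ⊆ Ioo l (l + t) ∪ Icc (l + t) (l + s) := by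
        intro x hx
        rcases lt_or_ge x (l + t) with h' | h'
        · exact Or.inl ⟨hx.1, h'⟩
        · exact Or.inr ⟨h', hx.2.le⟩
      have : volume (S ∪ Ioo l (l + s)) ≤ volume (S ∪ Ioo l (l + t)) + ENNReal.ofReal (s - t) := by
        calc volume (S ∪ Ioo l (l + s)) ≤ volume ((S ∪ Ioo l (l + t)) ∪ Icc (l + t) (l + s)) := by
              apply measure_mono; intro x hx
              rcases hx with hx | hx
              · exact Or.inl (Or.inl hx)
              · rcases hsub hx with h' | h'
                · exact Or.inl (Or.inr h')
                · exact Or.inr h'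
          _ ≤ volume (S ∪ Ioo l (l + t)) + volume (Icc (l + t) (l + s)) := measure_union_le _ _
          _ = volume (S ∪ Ioo l (l + t)) + ENNReal.ofReal (s - t) := by
              rw [Real.volume_Icc]; ring_nf
      have h2 := ENNReal.toReal_mono (by
          exact ENNReal.add_ne_top.mpr ⟨hfinU t, ENNReal.ofReal_ne_top⟩) this
      rw [ENNReal.toReal_add (hfinU t) ENNReal.ofReal_ne_top] at h2
      have h3 : ENNReal.toReal (ENNReal.ofReal (s - t)) ≤ dist s t := by
        rw [ENNReal.toReal_ofReal (by linarith)]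
        exact le_abs_self _ |>.trans_eq (Real.dist_eq s t).symm
      calc f s ≤ f t + (ENNReal.ofReal (s - t)).toReal := h2
        _ ≤ f t + dist s t := by linarith
  have hf0 : f 0 < c := by
    have h0 : volume (S ∪ Ioo l (l + 0)) = volume S := by simp
    rw [hf]; simp only [h0]
    exact (ENNReal.lt_ofReal_iff_toReal_lt hfin).mp hlt
  have hfc : c ≤ f c := by
    have hIoo : volume (Ioo l (l + c)) = ENNReal.ofReal c := by
      rw [Real.volume_Ioo, add_sub_cancel_left]
    have h1 : ENNReal.ofReal c ≤ volume (S ∪ Ioo l (l + c)) :=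
      hIoo ▸ measure_mono subset_union_right
    have := ENNReal.toReal_mono (hfinU c) h1
    rwa [ENNReal.toReal_ofReal hc.le] at this
  obtain ⟨t, hts, hft⟩ := intermediate_value_Icc hc.le hlip.continuous.continuousOn
    (show c ∈ Icc (f 0) (f c) from ⟨hf0.le, hfc⟩)
  refine ⟨Ioo l (l + t), isOpen_Ioo, Ioo_subset_Ioo_right (by linarith [hts.2]), ?_⟩
  rw [← ENNReal.ofReal_toReal (hfinU t)]
  exact congrArg ENNReal.ofReal hft


set_option maxHeartbeats 2000000 in
/-- Every measure-zero set `E ⊆ (a,b)` is contained in an open `U ⊆ (a,b)` that is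
`n`-small on `(a,b)`. -/
theorem exists_nsmall_superset (E : Set ℝ) (hE : volume E = 0)
    (a b : ℝ) (hab : a < b) (hEab : E ⊆ Ioo a b) (n : ℕ) (hn : 1 ≤ n) :
    ∃ U : Set ℝ, IsOpen U ∧ E ⊆ U ∧ U ⊆ Ioo a b ∧ NSmall U n a b := by

  set L : ℝ := b - a with hL
  have hL0 : 0 < L := sub_pos.mpr hab
  have hpow : ∀ k : ℕ, (0:ℝ) < 2 ^ k := fun k => by positivity
  have hdiv0 : ∀ k : ℕ, 0 < L / 2 ^ k := fun k => by positivity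
  have hmono : ∀ {i k : ℕ}, i ≤ k → L / 2 ^ k ≤ L / 2 ^ i := by
    intro i k h
    exact div_le_div_of_nonneg_left hL0.le (hpow i) (pow_le_pow_right₀ (by norm_num) h)
  have hstep : ∀ k : ℕ, L / 2 ^ (k+1) = L / 2 ^ k / 2 := fun k => by rw [pow_succ]; ring
  have hsplit : ∀ u v : ℕ, L / 2 ^ (u+v) = L / 2 ^ u / 2 ^ v := fun u v => by
    rw [pow_add]; ring
  set p : ℕ → ℝ := fun k => a + L / 2 ^ k with hp
  set q : ℕ → ℝ := fun k => b - L / 2 ^ k with hq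
  set c : ℕ → ℝ := fun j => L / 2 ^ (2 * n + j + 1) with hc
  set e : ℕ → ℝ := fun i => L / 2 ^ (2 * n + i + 7) with he
  -- basic facts
  have hc0 : ∀ j, 0 < c j := fun j => hdiv0 _
  have he0 : ∀ i, 0 < e i := fun i => hdiv0 _
  have heB : ∀ i, e i ≤ L / 2 ^ (i + 3) := fun i => hmono (by omega)
  have hpq : p 1 = q 1 := by simp only [hp, hq]; rw [hstep 0]; simp [hL]; ring
  have hpm : ∀ i : ℕ, p (i+1) ≤ a + L / 2 := by
    intro i
    have := hmono (show 1 ≤ i + 1 by omega)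
    simp only [hp]; rw [pow_one] at this; linarith
  have hqm : ∀ i : ℕ, a + L / 2 ≤ q (i+1) := by
    intro i
    have := hmono (show 1 ≤ i + 1 by omega)
    simp only [hq, hL]; rw [pow_one] at this; linarith
  -- the small open covers of E on each block interior
  have hWl' : ∀ k : ℕ, ∃ W : Set ℝ, IsOpen W ∧ E ∩ Ioo (p (k+2)) (p (k+1)) ⊆ W ∧
      W ⊆ Ioo (p (k+2)) (p (k+1)) ∧ volume W < ENNReal.ofReal (c (k+1) / 4) :=
    fun k => exists_open_small _ _ (measure_mono_null inter_subset_left hE) isOpen_Ioo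
      inter_subset_right (ENNReal.ofReal_pos.mpr (by positivity))
  choose Wl hWlo hWlE hWlsub hWlvol using hWl'
  have hWr' : ∀ k : ℕ, ∃ W : Set ℝ, IsOpen W ∧ E ∩ Ioo (q (k+1)) (q (k+2)) ⊆ W ∧
      W ⊆ Ioo (q (k+1)) (q (k+2)) ∧ volume W < ENNReal.ofReal (c (k+1) / 4) :=
    fun k => exists_open_small _ _ (measure_mono_null inter_subset_left hE) isOpen_Ioo
      inter_subset_right (ENNReal.ofReal_pos.mpr (by positivity))
  choose Wr hWro hWrE hWrsub hWrvol using hWr'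
  -- intervals around the dyadic endpoints
  set Il : ℕ → Set ℝ := fun i => Ioo (p (i+1) - e i) (p (i+1) + e i) with hIl
  set Ir : ℕ → Set ℝ := fun i => Ioo (q (i+1) - e i) (q (i+1) + e i) with hIr
  have hIr0 : Ir 0 = Il 0 := by
    show Ioo (q (0+1) - e 0) (q (0+1) + e 0) = Ioo (p (0+1) - e 0) (p (0+1) + e 0)
    rw [show q (0+1) = p (0+1) from hpq.symm]
  set V : Set ℝ := ⋃ k, (Wl k ∪ Wr k ∪ Il k ∪ Ir k) with hV
  have hVopen : IsOpen V :=
    isOpen_iUnion fun k => (((hWlo k).union (hWro k)).union isOpen_Ioo).union isOpen_Ioo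
  -- disjointness lemmas
  have hIoo_p_disj : ∀ i k : ℕ, i ≠ k → ∀ x, x ∈ Ioo (p (i+2)) (p (i+1)) →
      x ∈ Icc (p (k+2)) (p (k+1)) → False := by
    intro i k hik x hx hxB
    obtain ⟨h1, h2⟩ := hx; obtain ⟨h3, h4⟩ := hxB
    simp only [hp] at h1 h2 h3 h4
    rcases lt_or_gt_of_ne hik with h | h
    · have := hmono (show i + 2 ≤ k + 1 by omega); linarith
    · have := hmono (show k + 2 ≤ i + 1 by omega); linarith
  have hIoo_q_disj : ∀ i k : ℕ, i ≠ k → ∀ x, x ∈ Ioo (q (i+1)) (q (i+2)) →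
      x ∈ Icc (q (k+1)) (q (k+2)) → False := by
    intro i k hik x hx hxB
    obtain ⟨h1, h2⟩ := hx; obtain ⟨h3, h4⟩ := hxB
    simp only [hq] at h1 h2 h3 h4
    rcases lt_or_gt_of_ne hik with h | h
    · have := hmono (show i + 2 ≤ k + 1 by omega); linarith
    · have := hmono (show k + 2 ≤ i + 1 by omega); linarith
  have hIl_disj : ∀ i k : ℕ, i ≠ k → i ≠ k + 1 → ∀ x, x ∈ Il i →
      x ∈ Icc (p (k+2)) (p (k+1)) → False := by
    intro i k h1 h2 x hx hxB
    obtain ⟨hx1, hx2⟩ := hx; obtain ⟨h3, h4⟩ := hxB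
    simp only [hIl, hp] at hx1 hx2 h3 h4
    have heB' := heB i
    rcases lt_or_gt_of_ne h1 with h | h
    · -- i < k : block is to the left of the interval
      have ha1 := hmono (show i + 2 ≤ k + 1 by omega)
      have ha2 := hstep (i+1)
      have ha3 := hstep (i+2)
      have ha4 := hdiv0 (i+3)
      -- L/2^(k+1) + e i ≤ L/2^(i+1)
      linarith
    · -- i > k+1, so i ≥ k+2 : interval is to the left of the block
      have ha1 := hmono (show k + 3 ≤ i + 1 by omega)
      have ha2 := hmono (show k + 5 ≤ i + 3 by omega)
      have ha3 := hstep (k+2)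
      have ha4 := hstep (k+3)
      have ha5 := hstep (k+4)
      have ha6 := hdiv0 (k+5)
      linarith
  have hIr_disj : ∀ i k : ℕ, i ≠ k → i ≠ k + 1 → ∀ x, x ∈ Ir i →
      x ∈ Icc (q (k+1)) (q (k+2)) → False := by
    intro i k h1 h2 x hx hxB
    obtain ⟨hx1, hx2⟩ := hx; obtain ⟨h3, h4⟩ := hxB
    simp only [hIr, hq] at hx1 hx2 h3 h4
    have heB' := heB i
    rcases lt_or_gt_of_ne h1 with h | h
    · have ha1 := hmono (show i + 2 ≤ k + 1 by omega)
      have ha2 := hstep (i+1)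
      have ha3 := hstep (i+2)
      have ha4 := hdiv0 (i+3)
      linarith
    · have ha1 := hmono (show k + 3 ≤ i + 1 by omega)
      have ha2 := hmono (show k + 5 ≤ i + 3 by omega)
      have ha3 := hstep (k+2)
      have ha4 := hstep (k+3)
      have ha5 := hstep (k+4)
      have ha6 := hdiv0 (k+5)
      linarith
  -- right pieces lie strictly above the midpoint, left pieces strictly below
  have hWr_high : ∀ i x, x ∈ Ioo (q (i+1)) (q (i+2)) → a + L / 2 < x := by
    intro i x hx
    exact lt_of_le_of_lt (hqm i) hx.1
  have hIr_high : ∀ i x, 1 ≤ i → x ∈ Ir i → a + L / 2 < x := by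
    intro i x hi hx
    have hx1 := hx.1
    simp only [hIr, hq] at hx1
    have ha1 := hmono (show 2 ≤ i + 1 by omega)
    have ha2 : e i ≤ L / 2 ^ (i+3) := heB i
    have ha3 := hmono (show 2 ≤ i + 3 by omega)
    have ha4 := hstep 1
    have ha5 := hstep 0
    simp only [hL] at *
    linarith [hx1]
  have hWl_low : ∀ i x, x ∈ Ioo (p (i+2)) (p (i+1)) → x < a + L / 2 := by
    intro i x hx
    exact lt_of_lt_of_le hx.2 (hpm i)
  have hIl_low : ∀ i x, 1 ≤ i → x ∈ Il i → x < a + L / 2 := by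
    intro i x hi hx
    have hx2 := hx.2
    simp only [hIl, hp] at hx2
    have ha1 := hmono (show 2 ≤ i + 1 by omega)
    have ha2 : e i ≤ L / 2 ^ (i+3) := heB i
    have ha3 := hmono (show 2 ≤ i + 3 by omega)
    have ha4 := hstep 1
    have ha5 := hstep 0
    linarith [hx2]
  -- localization of V on left and right blocks
  have hVL : ∀ k : ℕ, V ∩ Icc (p (k+2)) (p (k+1)) ⊆ Wl k ∪ (Il k ∪ Il (k+1)) := by
    intro k x ⟨hxV, hxB⟩
    obtain ⟨i, hi⟩ := mem_iUnion.mp hxV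
    rcases hi with ((h | h) | h) | h
    · rcases eq_or_ne i k with rfl | hik
      · exact Or.inl h
      · exact absurd hxB fun hB => hIoo_p_disj i k hik x (hWlsub i h) hB
    · exact absurd hxB fun hB =>
        absurd (hWr_high i x (hWrsub i h)) (not_lt.mpr (le_trans hB.2 (hpm k)))
    · rcases eq_or_ne i k with rfl | h1
      · exact Or.inr (Or.inl h)
      · rcases eq_or_ne i (k+1) with rfl | h2
        · exact Or.inr (Or.inr h)
        · exact absurd hxB fun hB => hIl_disj i k h1 h2 x h hB
    · rcases Nat.eq_zero_or_pos i with rfl | hi1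
      · rw [hIr0] at h
        rcases eq_or_ne 0 k with rfl | h1
        · exact Or.inr (Or.inl h)
        · exact absurd hxB fun hB => hIl_disj 0 k h1 (by omega) x h hB
      · exact absurd hxB fun hB =>
          absurd (hIr_high i x hi1 h) (not_lt.mpr (le_trans hB.2 (hpm k)))
  have hVR : ∀ k : ℕ, V ∩ Icc (q (k+1)) (q (k+2)) ⊆ Wr k ∪ (Ir k ∪ Ir (k+1)) := by
    intro k x ⟨hxV, hxB⟩
    obtain ⟨i, hi⟩ := mem_iUnion.mp hxV
    rcases hi with ((h | h) | h) | h
    · exact absurd hxB fun hB =>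
        absurd (hWl_low i x (hWlsub i h)) (not_lt.mpr (le_trans (hqm k) hB.1))
    · rcases eq_or_ne i k with rfl | hik
      · exact Or.inl h
      · exact absurd hxB fun hB => hIoo_q_disj i k hik x (hWrsub i h) hB
    · rcases Nat.eq_zero_or_pos i with rfl | hi1
      · rw [← hIr0] at h
        rcases eq_or_ne 0 k with rfl | h1
        · exact Or.inr (Or.inl h)
        · exact absurd hxB fun hB => hIr_disj 0 k h1 (by omega) x h hB
      · exact absurd hxB fun hB =>
          absurd (hIl_low i x hi1 h) (not_lt.mpr (le_trans (hqm k) hB.1))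
    · rcases eq_or_ne i k with rfl | h1
      · exact Or.inr (Or.inl h)
      · rcases eq_or_ne i (k+1) with rfl | h2
        · exact Or.inr (Or.inr h)
        · exact absurd hxB fun hB => hIr_disj i k h1 h2 x h hB
  -- measure of the intervals
  have hIlvol : ∀ i, volume (Il i) = ENNReal.ofReal (2 * e i) := by
    intro i
    rw [hIl]
    rw [Real.volume_Ioo]
    congr 1; ring
  have hIrvol : ∀ i, volume (Ir i) = ENNReal.ofReal (2 * e i) := by
    intro i
    rw [hIr]
    rw [Real.volume_Ioo]
    congr 1; ring
  -- e in terms of c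
  have hec : ∀ k : ℕ, 2 * e k + 2 * e (k+1) ≤ c (k+1) / 2 := by
    intro k
    have he1 : e k = c (k+1) / 32 := by
      show L / 2 ^ (2*n+k+7) = L / 2 ^ (2*n+(k+1)+1) / 32
      rw [show 2*n+k+7 = (2*n+(k+1)+1)+5 from by omega, hsplit]; norm_num
    have he2 : e (k+1) = c (k+1) / 64 := by
      show L / 2 ^ (2*n+(k+1)+7) = L / 2 ^ (2*n+(k+1)+1) / 64
      rw [show 2*n+(k+1)+7 = (2*n+(k+1)+1)+6 from by omega, hsplit]; norm_num
    rw [he1, he2]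
    linarith [hc0 (k+1)]
  -- the measure of V on each block is strictly less than c (k+1)
  have hvolL : ∀ k : ℕ, volume (V ∩ Icc (p (k+2)) (p (k+1))) < ENNReal.ofReal (c (k+1)) := by
    intro k
    calc volume (V ∩ Icc (p (k+2)) (p (k+1)))
        ≤ volume (Wl k ∪ (Il k ∪ Il (k+1))) := measure_mono (hVL k)
      _ ≤ volume (Wl k) + (volume (Il k) + volume (Il (k+1))) :=
          le_trans (measure_union_le _ _) (add_le_add le_rfl (measure_union_le _ _))
      _ ≤ ENNReal.ofReal (c (k+1) / 4) +
            (ENNReal.ofReal (2 * e k) + ENNReal.ofReal (2 * e (k+1))) := by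
          rw [hIlvol, hIlvol]
          exact add_le_add (hWlvol k).le le_rfl
      _ = ENNReal.ofReal (c (k+1) / 4 + (2 * e k + 2 * e (k+1))) := by
          rw [← ENNReal.ofReal_add (by positivity) (by positivity),
              ← ENNReal.ofReal_add (by positivity) (by positivity)]
      _ < ENNReal.ofReal (c (k+1)) := by
          rw [ENNReal.ofReal_lt_ofReal_iff (hc0 (k+1))]
          linarith [hec k, hc0 (k+1)]
  have hvolR : ∀ k : ℕ, volume (V ∩ Icc (q (k+1)) (q (k+2))) < ENNReal.ofReal (c (k+1)) := by
    intro k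
    calc volume (V ∩ Icc (q (k+1)) (q (k+2)))
        ≤ volume (Wr k ∪ (Ir k ∪ Ir (k+1))) := measure_mono (hVR k)
      _ ≤ volume (Wr k) + (volume (Ir k) + volume (Ir (k+1))) :=
          le_trans (measure_union_le _ _) (add_le_add le_rfl (measure_union_le _ _))
      _ ≤ ENNReal.ofReal (c (k+1) / 4) +
            (ENNReal.ofReal (2 * e k) + ENNReal.ofReal (2 * e (k+1))) := by
          rw [hIrvol, hIrvol]
          exact add_le_add (hWrvol k).le le_rfl
      _ = ENNReal.ofReal (c (k+1) / 4 + (2 * e k + 2 * e (k+1))) := by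
          rw [← ENNReal.ofReal_add (by positivity) (by positivity),
              ← ENNReal.ofReal_add (by positivity) (by positivity)]
      _ < ENNReal.ofReal (c (k+1)) := by
          rw [ENNReal.ofReal_lt_ofReal_iff (hc0 (k+1))]
          linarith [hec k, hc0 (k+1)]
  -- padding sets
  have hAl' : ∀ k : ℕ, ∃ A : Set ℝ, IsOpen A ∧ A ⊆ Ioo (p (k+2)) (p (k+2) + c (k+1)) ∧
      volume ((V ∩ Icc (p (k+2)) (p (k+1))) ∪ A) = ENNReal.ofReal (c (k+1)) :=
    fun k => exists_pad _ (hVopen.measurableSet.inter measurableSet_Icc) (hc0 (k+1)) (hvolL k)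
  choose Al hAlo hAlsub hAlvol using hAl'
  have hAr' : ∀ k : ℕ, ∃ A : Set ℝ, IsOpen A ∧ A ⊆ Ioo (q (k+1)) (q (k+1) + c (k+1)) ∧
      volume ((V ∩ Icc (q (k+1)) (q (k+2))) ∪ A) = ENNReal.ofReal (c (k+1)) :=
    fun k => exists_pad _ (hVopen.measurableSet.inter measurableSet_Icc) (hc0 (k+1)) (hvolR k)
  choose Ar hAro hArsub hArvol using hAr'
  -- the padding sets sit inside the corresponding open blocks
  have hcsmall : ∀ k : ℕ, c (k+1) ≤ L / 2 ^ (k+2) := by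
    intro k
    have h1 : c (k+1) ≤ L / 2 ^ (k+3) := hmono (by omega)
    have h2 := hmono (show k+2 ≤ k+3 by omega)
    linarith
  have hAlsub' : ∀ k : ℕ, Al k ⊆ Ioo (p (k+2)) (p (k+1)) := by
    intro k
    refine (hAlsub k).trans (Ioo_subset_Ioo_right ?_)
    have h := hcsmall k
    have h2 := hstep (k+1)
    simp only [hp]
    linarith
  have hArsub' : ∀ k : ℕ, Ar k ⊆ Ioo (q (k+1)) (q (k+2)) := by
    intro k
    refine (hArsub k).trans (Ioo_subset_Ioo_right ?_)
    have h := hcsmall k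
    have h2 := hstep (k+1)
    simp only [hq]
    linarith
  -- membership helper for V
  have hmemV : ∀ (x : ℝ) (k : ℕ), x ∈ Wl k ∪ Wr k ∪ Il k ∪ Ir k → x ∈ V :=
    fun x k h => mem_iUnion.mpr ⟨k, h⟩
  have hp1 : p 1 = a + L / 2 := by simp only [hp]; norm_num
  -- E is covered by V
  have hEV : E ⊆ V := by
    intro x hxE
    obtain ⟨hax, hxb⟩ := hEab hxE
    rcases le_or_gt x (a + L / 2) with hxm | hxm
    · -- left half
      have hex : ∃ m : ℕ, L / 2 ^ (m+1) ≤ x - a := by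
        obtain ⟨m, hm⟩ := exists_pow_lt_of_lt_one
          (show (0:ℝ) < (x - a)/L from div_pos (by linarith) hL0)
          (show (1:ℝ)/2 < 1 by norm_num)
        refine ⟨m, ?_⟩
        have h1 : (1:ℝ)/2^m < (x-a)/L := by rwa [div_pow, one_pow] at hm
        have h2 : L / 2^m < x - a := by
          rw [div_lt_iff₀ (hpow m)]
          have := (div_lt_div_iff₀ (hpow m) hL0).mp h1
          linarith
        have h3 := hmono (show m ≤ m+1 by omega)
        linarith
      have hPm : L / 2 ^ (Nat.find hex + 1) ≤ x - a := Nat.find_spec hex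
      rcases Nat.eq_zero_or_pos (Nat.find hex) with h0 | h0
      · rw [h0] at hPm
        have hL21 : L / 2 ^ (0+1) = L / 2 := by norm_num
        have hx1 : x = a + L / 2 := by linarith
        apply hmemV x 0
        refine Or.inl (Or.inr ?_)
        show x ∈ Ioo (p 1 - e 0) (p 1 + e 0)
        have := he0 0
        rw [hp1]
        constructor <;> linarith
      · obtain ⟨kk, hkk⟩ : ∃ kk, Nat.find hex = kk + 1 := ⟨Nat.find hex - 1, by omega⟩
        have hnot : ¬ (L / 2 ^ (kk + 1) ≤ x - a) := Nat.find_min hex (by omega)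
        push_neg at hnot
        rw [hkk] at hPm
        have hee : L / 2 ^ (kk+1+1) = L / 2 ^ (kk+2) := rfl
        rcases eq_or_lt_of_le hPm with heq | hlt
        · apply hmemV x (kk+1)
          refine Or.inl (Or.inr ?_)
          show x ∈ Ioo (p (kk+2) - e (kk+1)) (p (kk+2) + e (kk+1))
          have := he0 (kk+1)
          simp only [hp]
          constructor <;> linarith
        · apply hmemV x kk
          refine Or.inl (Or.inl (Or.inl ?_))
          apply hWlE kk
          refine ⟨hxE, ?_⟩
          show x ∈ Ioo (p (kk+2)) (p (kk+1))
          simp only [hp]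
          constructor <;> linarith
    · -- right half
      have hex : ∃ m : ℕ, L / 2 ^ (m+1) ≤ b - x := by
        obtain ⟨m, hm⟩ := exists_pow_lt_of_lt_one
          (show (0:ℝ) < (b - x)/L from div_pos (by linarith) hL0)
          (show (1:ℝ)/2 < 1 by norm_num)
        refine ⟨m, ?_⟩
        have h1 : (1:ℝ)/2^m < (b-x)/L := by rwa [div_pow, one_pow] at hm
        have h2 : L / 2^m < b - x := by
          rw [div_lt_iff₀ (hpow m)]
          have := (div_lt_div_iff₀ (hpow m) hL0).mp h1
          linarith
        have h3 := hmono (show m ≤ m+1 by omega)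
        linarith
      have hPm : L / 2 ^ (Nat.find hex + 1) ≤ b - x := Nat.find_spec hex
      have h0 : Nat.find hex ≠ 0 := by
        intro h0
        rw [h0] at hPm
        have hL21 : L / 2 ^ (0+1) = L / 2 := by norm_num
        simp only [hL] at hxm hPm
        linarith [hPm]
      obtain ⟨kk, hkk⟩ : ∃ kk, Nat.find hex = kk + 1 := ⟨Nat.find hex - 1, by omega⟩
      have hnot : ¬ (L / 2 ^ (kk + 1) ≤ b - x) := Nat.find_min hex (by omega)
      push_neg at hnot
      rw [hkk] at hPm
      rcases eq_or_lt_of_le hPm with heq | hlt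
      · apply hmemV x (kk+1)
        refine Or.inr ?_
        show x ∈ Ioo (q (kk+2) - e (kk+1)) (q (kk+2) + e (kk+1))
        have := he0 (kk+1)
        simp only [hq]
        constructor <;> linarith
      · apply hmemV x kk
        refine Or.inl (Or.inl (Or.inr ?_))
        apply hWrE kk
        refine ⟨hxE, ?_⟩
        show x ∈ Ioo (q (kk+1)) (q (kk+2))
        simp only [hq]
        constructor <;> linarith
  -- blocks lie inside (a,b)
  have hIooL : ∀ k : ℕ, Ioo (p (k+2)) (p (k+1)) ⊆ Ioo a b := by
    intro k x hx
    obtain ⟨h1, h2⟩ := hx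
    simp only [hp] at h1 h2
    have := hdiv0 (k+2)
    have h3 := hpm k
    simp only [hp] at h3
    constructor <;> [linarith; linarith [hL0, hL]]
  have hIooR : ∀ k : ℕ, Ioo (q (k+1)) (q (k+2)) ⊆ Ioo a b := by
    intro k x hx
    obtain ⟨h1, h2⟩ := hx
    simp only [hq] at h1 h2
    have := hdiv0 (k+2)
    have h3 := hqm k
    simp only [hq] at h3
    constructor <;> [linarith [hL0, hL]; linarith]
  have hIlab : ∀ i : ℕ, Il i ⊆ Ioo a b := by
    intro i x hx
    obtain ⟨h1, h2⟩ := hx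
    simp only [hp] at h1 h2
    have hei := heB i
    have h3 := hmono (show i+1 ≤ i+3 by omega)
    have h4 := hdiv0 (i+3)
    have h5 := hstep (i+1)
    have h6 := hstep (i+2)
    have h7 := hdiv0 (i+1)
    have h8 := hpm i
    simp only [hp] at h8
    have h9 := hmono (show 3 ≤ i+3 by omega)
    have h10 : L / 2 ^ 3 = L / 8 := by norm_num
    have h11 : (0:ℝ) < L := hL0
    constructor
    · linarith
    · have : x < a + L/2 + L/8 := by linarith
      linarith [hL]
  have hIrab : ∀ i : ℕ, Ir i ⊆ Ioo a b := by
    intro i x hx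
    obtain ⟨h1, h2⟩ := hx
    simp only [hq] at h1 h2
    have hei := heB i
    have h3 := hmono (show i+1 ≤ i+3 by omega)
    have h4 := hdiv0 (i+3)
    have h5 := hstep (i+1)
    have h6 := hstep (i+2)
    have h7 := hdiv0 (i+1)
    have h8 := hqm i
    simp only [hq] at h8
    have h9 := hmono (show 3 ≤ i+3 by omega)
    have h10 : L / 2 ^ 3 = L / 8 := by norm_num
    constructor
    · have : b - L/2 - L/8 < x := by linarith
      linarith [hL]
    · linarith
  -- the final set
  set U : Set ℝ := V ∪ ⋃ k, (Al k ∪ Ar k) with hU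
  have hUopen : IsOpen U :=
    hVopen.union (isOpen_iUnion fun k => (hAlo k).union (hAro k))
  have hUab : U ⊆ Ioo a b := by
    intro x hx
    rcases hx with hx | hx
    · obtain ⟨i, hi⟩ := mem_iUnion.mp hx
      rcases hi with ((h | h) | h) | h
      · exact hIooL i (hWlsub i h)
      · exact hIooR i (hWrsub i h)
      · exact hIlab i h
      · exact hIrab i h
    · obtain ⟨i, hi⟩ := mem_iUnion.mp hx
      rcases hi with h | h
      · exact hIooL i (hAlsub' i h)
      · exact hIooR i (hArsub' i h)
  refine ⟨U, hUopen, hEV.trans subset_union_left, hUab, ?_⟩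
  intro j hj
  obtain ⟨k, rfl⟩ : ∃ k, j = k + 1 := ⟨j - 1, by omega⟩
  constructor
  · have hUeq : U ∩ Icc (p (k+2)) (p (k+1)) = (V ∩ Icc (p (k+2)) (p (k+1))) ∪ Al k := by
      apply subset_antisymm
      · rintro x ⟨hxU, hxB⟩
        rcases hxU with hxV | hxA
        · exact Or.inl ⟨hxV, hxB⟩
        · obtain ⟨i, hi⟩ := mem_iUnion.mp hxA
          rcases hi with h | h
          · rcases eq_or_ne i k with rfl | hik
            · exact Or.inr h
            · exact absurd hxB fun hB => hIoo_p_disj i k hik x (hAlsub' i h) hB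
          · exact absurd (hWr_high i x (hArsub' i h)) (not_lt.mpr (hxB.2.trans (hpm k)))
      · rintro x (⟨hxV, hxB⟩ | hxA)
        · exact ⟨Or.inl hxV, hxB⟩
        · exact ⟨Or.inr (mem_iUnion.mpr ⟨k, Or.inl hxA⟩),
            Ioo_subset_Icc_self (hAlsub' k hxA)⟩
    show volume (U ∩ Icc (p (k+2)) (p (k+1))) = ENNReal.ofReal (c (k+1))
    rw [hUeq]
    exact hAlvol k
  · have hUeq : U ∩ Icc (q (k+1)) (q (k+2)) = (V ∩ Icc (q (k+1)) (q (k+2))) ∪ Ar k := by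
      apply subset_antisymm
      · rintro x ⟨hxU, hxB⟩
        rcases hxU with hxV | hxA
        · exact Or.inl ⟨hxV, hxB⟩
        · obtain ⟨i, hi⟩ := mem_iUnion.mp hxA
          rcases hi with h | h
          · exact absurd (hWl_low i x (hAlsub' i h)) (not_lt.mpr ((hqm k).trans hxB.1))
          · rcases eq_or_ne i k with rfl | hik
            · exact Or.inr h
            · exact absurd hxB fun hB => hIoo_q_disj i k hik x (hArsub' i h) hB
      · rintro x (⟨hxV, hxB⟩ | hxA)
        · exact ⟨Or.inl hxV, hxB⟩
        · exact ⟨Or.inr (mem_iUnion.mpr ⟨k, Or.inr hxA⟩),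
            Ioo_subset_Icc_self (hArsub' k hxA)⟩
    show volume (U ∩ Icc (q (k+1)) (q (k+2))) = ENNReal.ofReal (c (k+1))
    rw [hUeq]
    exact hArvol k
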